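/- Let f : X → X be a homeomorphism of a metric space and let k be a nonzero integer. Every Borel probability measure that is inner-distal with respect to f is also inner-distal with respect to f^k. In particular, if f is inner-distal then f^k is inner-distal. -/

import Mathlib

open Metric Set MeasureTheory Filter Topology

/-- The proximal cell of `x` with respect to the iterates `f ^ n`, `n : ℤ`. -/
noncomputable def proximalCell {X : Type*} [MetricSpace X] (f : Equiv.Perm X) (x : X) : Set X :=
  {y | (⨅ n : ℤ, dist ((f ^ n) x) ((f ^ n) y)) = 0}

lemma proximalCell_pow_subset {X : Type*} [MetricSpace X] (g : Equiv.Perm X) (k : ℤ) (x : X) :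
    proximalCell (g ^ k) x ⊆ proximalCell g x := by
  intro y hy
  simp only [proximalCell, Set.mem_setOf_eq] at hy ⊢
  have hbdd : BddBelow (Set.range fun n : ℤ => dist ((g ^ n) x) ((g ^ n) y)) :=
    ⟨0, by rintro _ ⟨n, rfl⟩; exact dist_nonneg⟩
  apply le_antisymm
  · calc (⨅ n : ℤ, dist ((g ^ n) x) ((g ^ n) y))
        ≤ ⨅ m : ℤ, dist (((g ^ k) ^ m) x) (((g ^ k) ^ m) y) := by
          apply le_ciInf
          intro m
          have : (g ^ k) ^ m = g ^ (k * m) := (zpow_mul g k m).symm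
          rw [this]
          exact ciInf_le hbdd (k * m)
      _ = 0 := hy
  · exact le_ciInf fun n => dist_nonneg

/-- Every measure inner-distal with respect to f is inner-distal with respect to f^k;
in particular if f is inner-distal then so is f^k. -/
theorem stmt16 {X : Type*} [MetricSpace X] [MeasurableSpace X] [BorelSpace X]
    (f : X ≃ₜ X) (k : ℤ) (hk : k ≠ 0) :
    (∀ μ : Measure X, IsProbabilityMeasure μ →
      (∀ x : X, μ (interior (proximalCell f.toEquiv x)) = 0) →
      ∀ x : X, μ (interior (proximalCell (f.toEquiv ^ k) x)) = 0) ∧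
    ((∀ x : X, interior (proximalCell f.toEquiv x) = ∅) →
      ∀ x : X, interior (proximalCell (f.toEquiv ^ k) x) = ∅) := by
  have hsub : ∀ x : X, interior (proximalCell (f.toEquiv ^ k) x) ⊆
      interior (proximalCell f.toEquiv x) :=
    fun x => interior_mono (proximalCell_pow_subset f.toEquiv k x)
  constructor
  · intro μ _ h x
    exact le_antisymm ((measure_mono (hsub x)).trans (h x).le) zero_le
  · intro h x
    exact Set.eq_empty_of_subset_empty ((hsub x).trans (h x).le)
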